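/- Let T > 0 and let f, g have Fourier coefficients (f_{n,m}), (g_{n,m}) each admitting a representation of the form f_{n,m} = a_{n,m}(|n²−m|+1/T)^{−1/2} + a_n |n²−m|^{−1} χ_{|n²−m|>1/T} with Σ|a_{n,m}|² ≤ 1, Σ|a_n|² ≤ 1 (and similarly for g with coefficients b). Then |Σ_{n,m} f_{n,m} g_{n,m}| ≤ C T for an absolute constant C. -/

import Mathlib

open Classical

section helpers

-- Cauchy–Schwarz for tsums of nonnegative reals
lemma my_cs {ι : Type*} (u v : ι → ℝ) (hu0 : ∀ i, 0 ≤ u i) (hv0 : ∀ i, 0 ≤ v i)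
    (hu : Summable (fun i => u i ^ 2)) (hv : Summable (fun i => v i ^ 2)) :
    Summable (fun i => u i * v i) ∧
      ∑' i, u i * v i ≤ Real.sqrt (∑' i, u i ^ 2) * Real.sqrt (∑' i, v i ^ 2) := by
  have hsum : Summable (fun i => u i * v i) := by
    refine Summable.of_nonneg_of_le (fun i => mul_nonneg (hu0 i) (hv0 i))
      (fun i => ?_) ((hu.add hv).div_const 2)
    nlinarith [sq_nonneg (u i - v i)]
  refine ⟨hsum, Summable.tsum_le_of_sum_le hsum fun s => ?_⟩
  have hs0 : 0 ≤ ∑ i ∈ s, u i * v i :=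
    Finset.sum_nonneg fun i _ => mul_nonneg (hu0 i) (hv0 i)
  have h1 : (∑ i ∈ s, u i * v i) ^ 2 ≤ (∑ i ∈ s, u i ^ 2) * (∑ i ∈ s, v i ^ 2) :=
    Finset.sum_mul_sq_le_sq_mul_sq s u v
  have h2 : ∑ i ∈ s, u i * v i ≤
      Real.sqrt ((∑ i ∈ s, u i ^ 2) * (∑ i ∈ s, v i ^ 2)) := by
    rw [← Real.sqrt_sq hs0]
    exact Real.sqrt_le_sqrt h1
  refine h2.trans ?_
  rw [Real.sqrt_mul (Finset.sum_nonneg fun i _ => sq_nonneg _)]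
  gcongr
  · exact Summable.sum_le_tsum s (fun i _ => sq_nonneg _) hu
  · exact Summable.sum_le_tsum s (fun i _ => sq_nonneg _) hv

-- tail bound over ℕ
lemma my_tail (T : ℝ) (hT : 0 < T) :
    Summable (fun j : ℕ => (if 1 / T < (j : ℝ) then ((j : ℝ))⁻¹ else 0) ^ 2) ∧
      ∑' j : ℕ, (if 1 / T < (j : ℝ) then ((j : ℝ))⁻¹ else 0) ^ 2 ≤ 2 * T := by
  set ψ : ℕ → ℝ := fun j => (if 1 / T < (j : ℝ) then ((j : ℝ))⁻¹ else 0) ^ 2 with hψ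
  have hψ0 : ∀ j, 0 ≤ ψ j := fun j => sq_nonneg _
  set k0 : ℕ := Nat.floor (1 / T) + 1 with hk0
  have hk0pos : 0 < k0 := Nat.succ_pos _
  have hTk0 : 1 / T < (k0 : ℝ) := by
    have := Nat.lt_floor_add_one (1 / T)
    show 1 / T < ((Nat.floor (1 / T) + 1 : ℕ) : ℝ)
    push_cast
    exact this
  set ρ : ℕ → ℝ := fun j => ((max j k0 : ℕ) : ℝ)⁻¹ with hρ
  have key : ∀ j, ψ j ≤ 2 * (ρ j - ρ (j + 1)) := by
    intro j
    have hmono : ρ (j + 1) ≤ ρ j := by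
      apply inv_anti₀
      · exact_mod_cast Nat.lt_of_lt_of_le hk0pos (le_max_right _ _)
      · exact_mod_cast max_le_max (Nat.le_succ j) (le_refl k0)
    by_cases hj : 1 / T < (j : ℝ)
    · have hk0j : k0 ≤ j := by
        have : Nat.floor (1 / T) < j := by
          rw [Nat.floor_lt (by positivity)]
          exact hj
        omega
      have hj1 : 1 ≤ j := le_trans hk0pos hk0j
      have hr1 : (1 : ℝ) ≤ (j : ℝ) := by exact_mod_cast hj1
      have hrpos : (0 : ℝ) < (j : ℝ) := by linarith
      have m1 : max j k0 = j := max_eq_left hk0j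
      have m2 : max (j + 1) k0 = j + 1 := max_eq_left (le_trans hk0j (Nat.le_succ j))
      have e1 : ρ j = ((j : ℝ))⁻¹ := by rw [hρ]; simp only [m1]
      have e2 : ρ (j + 1) = ((j : ℝ) + 1)⁻¹ := by
        rw [hρ]; simp only [m2]; push_cast; ring
      rw [e1, e2, hψ]
      simp only [if_pos hj]
      have hj0 : (j : ℝ) ≠ 0 := ne_of_gt hrpos
      have hj10 : (j : ℝ) + 1 ≠ 0 := by positivity
      rw [← sub_nonneg]
      have expand : 2 * (((j:ℝ))⁻¹ - ((j:ℝ) + 1)⁻¹) - ((j:ℝ))⁻¹ ^ 2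
          = ((j:ℝ) - 1) / ((j:ℝ)^2 * ((j:ℝ) + 1)) := by
        field_simp
        ring
      rw [expand]
      apply div_nonneg
      · nlinarith
      · positivity
    · have : ψ j = 0 := by simp only [hψ, if_neg hj]; norm_num
      rw [this]
      linarith
  have hpart : ∀ n, ∑ j ∈ Finset.range n, ψ j ≤ 2 * T := by
    intro n
    calc ∑ j ∈ Finset.range n, ψ j ≤ ∑ j ∈ Finset.range n, 2 * (ρ j - ρ (j + 1)) :=
          Finset.sum_le_sum fun j _ => key j
      _ = 2 * (ρ 0 - ρ n) := by rw [← Finset.mul_sum, Finset.sum_range_sub' ρ]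
      _ ≤ 2 * ρ 0 := by
          have : 0 ≤ ρ n := by positivity
          linarith
      _ ≤ 2 * T := by
          have h0 : ρ 0 = ((k0 : ℕ) : ℝ)⁻¹ := by
            rw [hρ]; simp
          rw [h0]
          have hk0r : (0 : ℝ) < (k0 : ℝ) := by exact_mod_cast hk0pos
          have : ((k0 : ℕ) : ℝ)⁻¹ ≤ T := by
            rw [inv_le_comm₀ hk0r hT, inv_eq_one_div]
            linarith
          linarith
  exact ⟨summable_of_sum_range_le hψ0 hpart, Real.tsum_le_of_sum_range_le hψ0 hpart⟩

-- counting bound over ℤ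
lemma my_count (T : ℝ) (hT : 0 < T) (N : ℤ) :
    Summable (fun m : ℤ => (if 1 / T < |(N : ℝ) - (m : ℝ)| then |(N : ℝ) - (m : ℝ)|⁻¹ else 0) ^ 2) ∧
      ∑' m : ℤ, (if 1 / T < |(N : ℝ) - (m : ℝ)| then |(N : ℝ) - (m : ℝ)|⁻¹ else 0) ^ 2 ≤ 4 * T := by
  obtain ⟨hφs, hφb⟩ := my_tail T hT
  set φ : ℕ → ℝ := fun j => (if 1 / T < (j : ℝ) then ((j : ℝ))⁻¹ else 0) ^ 2 with hφ
  have hφ0 : ∀ j, 0 ≤ φ j := fun j => sq_nonneg _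
  set F : ℤ → ℝ := fun k => (if 1 / T < |(k : ℝ)| then |(k : ℝ)|⁻¹ else 0) ^ 2 with hF
  have hFnat : ∀ n : ℕ, F (n : ℤ) = φ n := by
    intro n
    rw [hF, hφ]
    norm_num [abs_of_nonneg (show (0:ℝ) ≤ (n:ℝ) from Nat.cast_nonneg n)]
  have hFneg : ∀ n : ℕ, F (-(n + 1) : ℤ) = φ (n + 1) := by
    intro n
    have habs : |((-(n + 1) : ℤ) : ℝ)| = ((n : ℝ) + 1) := by
      push_cast
      rw [abs_neg, abs_of_nonneg (by positivity)]
    simp only [hF, hφ, habs]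
    push_cast
    ring_nf
  have hs1 : Summable (fun n : ℕ => F (n : ℤ)) := by
    simpa only [hFnat] using hφs
  have hs2 : Summable (fun n : ℕ => F (-(n + 1) : ℤ)) := by
    have : Summable (fun n : ℕ => φ (n + 1)) := (summable_nat_add_iff 1).mpr hφs
    simpa only [hFneg] using this
  have hFsum : Summable F := Summable.of_nat_of_neg_add_one hs1 hs2
  have hFval : ∑' k : ℤ, F k ≤ 4 * T := by
    rw [tsum_of_nat_of_neg_add_one hs1 hs2]
    have h1 : ∑' n : ℕ, F (n : ℤ) ≤ 2 * T := by
      rw [tsum_congr hFnat]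
      exact hφb
    have h2 : ∑' n : ℕ, F (-(n + 1) : ℤ) ≤ 2 * T := by
      rw [tsum_congr hFneg]
      have h0 : 0 ≤ ∑ i ∈ Finset.range 1, φ i := Finset.sum_nonneg fun i _ => hφ0 i
      have : ∑' n : ℕ, φ (n + 1) ≤ ∑' n, φ n := by linarith [Summable.sum_add_tsum_nat_add 1 hφs]
      linarith
    linarith
  have hre : ∀ m : ℤ, (if 1 / T < |(N : ℝ) - (m : ℝ)| then |(N : ℝ) - (m : ℝ)|⁻¹ else 0) ^ 2
      = F ((Equiv.subLeft N) m) := by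
    intro m
    have : ((Equiv.subLeft N) m : ℝ) = (N : ℝ) - (m : ℝ) := by
      simp [Equiv.subLeft]
    rw [hF]
    simp only [this]
  constructor
  · rw [funext hre]
    exact ((Equiv.subLeft N).summable_iff (f := F)).mpr hFsum
  · rw [funext hre]
    calc ∑' m : ℤ, F ((Equiv.subLeft N) m) = ∑' k : ℤ, F k := (Equiv.subLeft N).tsum_eq F
      _ ≤ 4 * T := hFval

-- fiberwise summation bound over ℕ × ℤ
lemma my_prod {h : ℕ × ℤ → ℝ} (h0 : ∀ q, 0 ≤ h q) {c : ℕ → ℝ}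
    (hc : Summable c) {K : ℝ}
    (hrow : ∀ n, Summable (fun m : ℤ => h (n, m)))
    (hbd : ∀ n, (∑' m : ℤ, h (n, m)) ≤ c n * K) :
    Summable h ∧ ∑' q, h q ≤ (∑' n, c n) * K := by
  have hcol : Summable (fun n => ∑' m : ℤ, h (n, m)) :=
    Summable.of_nonneg_of_le (fun n => tsum_nonneg fun m => h0 _) hbd (hc.mul_right K)
  have hs : Summable h := (summable_prod_of_nonneg fun q => h0 q).mpr ⟨hrow, hcol⟩
  refine ⟨hs, ?_⟩
  rw [Summable.tsum_prod' hs hrow]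
  calc ∑' n, ∑' m : ℤ, h (n, m) ≤ ∑' n, c n * K := Summable.tsum_le_tsum hbd hcol (hc.mul_right K)
    _ = (∑' n, c n) * K := hc.tsum_mul_right K

noncomputable def myD (n : ℕ) (m : ℤ) : ℝ := |((n : ℝ) + 1) ^ 2 - (m : ℝ)|

noncomputable def myW (T : ℝ) (n : ℕ) (m : ℤ) : ℝ := (myD n m + 1 / T) ^ (-(1 / 2) : ℝ)

noncomputable def myE (T : ℝ) (n : ℕ) (m : ℤ) : ℝ :=
  if 1 / T < myD n m then (myD n m)⁻¹ else 0

lemma myD_nonneg (n : ℕ) (m : ℤ) : 0 ≤ myD n m := abs_nonneg _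

lemma myW_nonneg {T : ℝ} (hT : 0 < T) (n : ℕ) (m : ℤ) : 0 ≤ myW T n m :=
  Real.rpow_nonneg (add_nonneg (myD_nonneg n m) (by positivity)) _

lemma myE_nonneg {T : ℝ} (n : ℕ) (m : ℤ) : 0 ≤ myE T n m := by
  unfold myE
  split_ifs
  · exact inv_nonneg.mpr (myD_nonneg n m)
  · exact le_refl 0

lemma myW_sq_le {T : ℝ} (hT : 0 < T) (n : ℕ) (m : ℤ) : myW T n m ^ 2 ≤ T := by
  have hpos : 0 < myD n m + 1 / T :=
    add_pos_of_nonneg_of_pos (myD_nonneg n m) (by positivity)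
  have hsq : myW T n m ^ 2 = (myD n m + 1 / T)⁻¹ := by
    unfold myW
    rw [sq, ← Real.rpow_add hpos]
    have hexp : (-(1 / 2) : ℝ) + (-(1 / 2)) = -1 := by norm_num
    rw [hexp, Real.rpow_neg_one]
  rw [hsq]
  calc (myD n m + 1 / T)⁻¹ ≤ (1 / T)⁻¹ :=
        inv_anti₀ (by positivity) (le_add_of_nonneg_left (myD_nonneg n m))
    _ = T := by rw [one_div, inv_inv]

lemma myWE_sq_le {T : ℝ} (hT : 0 < T) (n : ℕ) (m : ℤ) :
    (myW T n m * myE T n m) ^ 2 ≤ T * myE T n m ^ 2 := by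
  rw [mul_pow]
  exact mul_le_mul_of_nonneg_right (myW_sq_le hT n m) (sq_nonneg _)

lemma my_count' (T : ℝ) (hT : 0 < T) (n : ℕ) :
    Summable (fun m : ℤ => myE T n m ^ 2) ∧ ∑' m : ℤ, myE T n m ^ 2 ≤ 4 * T := by
  obtain ⟨h1, h2⟩ := my_count T hT (((n : ℤ) + 1) ^ 2)
  have key : ∀ m : ℤ,
      (if 1 / T < |(((((n : ℤ) + 1) ^ 2 : ℤ)) : ℝ) - (m : ℝ)| then
        |(((((n : ℤ) + 1) ^ 2 : ℤ)) : ℝ) - (m : ℝ)|⁻¹ else 0) ^ 2 = myE T n m ^ 2 := by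
    intro m
    have hc : ((((n : ℤ) + 1) ^ 2 : ℤ) : ℝ) - (m : ℝ) = ((n : ℝ) + 1) ^ 2 - (m : ℝ) := by
      push_cast
      ring
    unfold myE myD
    rw [hc]
  rw [funext key] at h1 h2
  exact ⟨h1, h2⟩

end helpers

set_option maxHeartbeats 2000000 in
theorem tripleNorm_bilinear_bound :
    ∃ C > 0, ∀ (T : ℝ), 0 < T →
      ∀ (a b : ℕ → ℤ → ℂ) (aa bb : ℕ → ℂ) (f g : ℕ → ℤ → ℂ),
      Summable (fun q : ℕ × ℤ => ‖a q.1 q.2‖ ^ 2) →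
      (∑' q : ℕ × ℤ, ‖a q.1 q.2‖ ^ 2) ≤ 1 →
      Summable (fun n : ℕ => ‖aa n‖ ^ 2) → (∑' n : ℕ, ‖aa n‖ ^ 2) ≤ 1 →
      Summable (fun q : ℕ × ℤ => ‖b q.1 q.2‖ ^ 2) →
      (∑' q : ℕ × ℤ, ‖b q.1 q.2‖ ^ 2) ≤ 1 →
      Summable (fun n : ℕ => ‖bb n‖ ^ 2) → (∑' n : ℕ, ‖bb n‖ ^ 2) ≤ 1 →
      (∀ n m, f n m =
        a n m * ((|(((n : ℝ) + 1)) ^ 2 - (m : ℝ)| + 1 / T) ^ (-(1 / 2) : ℝ) : ℝ)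
          + (if 1 / T < |(((n : ℝ) + 1)) ^ 2 - (m : ℝ)| then
              aa n * ((|(((n : ℝ) + 1)) ^ 2 - (m : ℝ)|⁻¹ : ℝ) : ℂ) else 0)) →
      (∀ n m, g n m =
        b n m * ((|(((n : ℝ) + 1)) ^ 2 - (m : ℝ)| + 1 / T) ^ (-(1 / 2) : ℝ) : ℝ)
          + (if 1 / T < |(((n : ℝ) + 1)) ^ 2 - (m : ℝ)| then
              bb n * ((|(((n : ℝ) + 1)) ^ 2 - (m : ℝ)|⁻¹ : ℝ) : ℂ) else 0)) →
      ‖∑' q : ℕ × ℤ, f q.1 q.2 * g q.1 q.2‖ ≤ C * T := by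
  refine ⟨9, by norm_num, ?_⟩
  intro T hT a b aa bb f g ha hA haa hAA hb hB hbb hBB hf hg
  have hf' : ∀ n m, f n m =
      a n m * ((myW T n m : ℝ) : ℂ)
        + (if 1 / T < myD n m then aa n * (((myD n m)⁻¹ : ℝ) : ℂ) else 0) := hf
  have hg' : ∀ n m, g n m =
      b n m * ((myW T n m : ℝ) : ℂ)
        + (if 1 / T < myD n m then bb n * (((myD n m)⁻¹ : ℝ) : ℂ) else 0) := hg
  -- norm bounds
  have normbd : ∀ (c : ℕ → ℤ → ℂ) (cc : ℕ → ℂ) (F : ℕ → ℤ → ℂ),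
      (∀ n m, F n m = c n m * ((myW T n m : ℝ) : ℂ)
        + (if 1 / T < myD n m then cc n * (((myD n m)⁻¹ : ℝ) : ℂ) else 0)) →
      ∀ n m, ‖F n m‖ ≤ ‖c n m‖ * myW T n m + ‖cc n‖ * myE T n m := by
    intro c cc F hF n m
    rw [hF n m]
    refine (norm_add_le _ _).trans (add_le_add ?_ ?_)
    · rw [norm_mul, Complex.norm_real, Real.norm_eq_abs,
        abs_of_nonneg (myW_nonneg hT n m)]
    · unfold myE
      split_ifs with hcond
      · rw [norm_mul, Complex.norm_real, Real.norm_eq_abs,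
          abs_of_nonneg (inv_nonneg.mpr (myD_nonneg n m))]
      · simp
  have hfb := normbd a aa f hf'
  have hgb := normbd b bb g hg'
  -- the four pieces
  set u1 : ℕ × ℤ → ℝ := fun q => ‖a q.1 q.2‖ * myW T q.1 q.2 with hu1
  set v1 : ℕ × ℤ → ℝ := fun q => ‖b q.1 q.2‖ * myW T q.1 q.2 with hv1
  set u2 : ℕ × ℤ → ℝ := fun q => ‖a q.1 q.2‖ with hu2
  set v2 : ℕ × ℤ → ℝ := fun q => ‖bb q.1‖ * (myW T q.1 q.2 * myE T q.1 q.2) with hv2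
  set u3 : ℕ × ℤ → ℝ := fun q => ‖b q.1 q.2‖ with hu3
  set v3 : ℕ × ℤ → ℝ := fun q => ‖aa q.1‖ * (myW T q.1 q.2 * myE T q.1 q.2) with hv3
  set h4 : ℕ × ℤ → ℝ := fun q => (‖aa q.1‖ * ‖bb q.1‖) * myE T q.1 q.2 ^ 2 with hh4
  -- square bounds for u1 v1
  have wsq : ∀ (c : ℕ → ℤ → ℂ), Summable (fun q : ℕ × ℤ => ‖c q.1 q.2‖ ^ 2) →
      (∑' q : ℕ × ℤ, ‖c q.1 q.2‖ ^ 2) ≤ 1 →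
      Summable (fun q : ℕ × ℤ => (‖c q.1 q.2‖ * myW T q.1 q.2) ^ 2) ∧
        ∑' q : ℕ × ℤ, (‖c q.1 q.2‖ * myW T q.1 q.2) ^ 2 ≤ T := by
    intro c hc hc1
    have hle : ∀ q : ℕ × ℤ, (‖c q.1 q.2‖ * myW T q.1 q.2) ^ 2 ≤ ‖c q.1 q.2‖ ^ 2 * T := by
      intro q
      rw [mul_pow]
      exact mul_le_mul_of_nonneg_left (myW_sq_le hT q.1 q.2) (sq_nonneg _)
    have hs : Summable (fun q : ℕ × ℤ => (‖c q.1 q.2‖ * myW T q.1 q.2) ^ 2) :=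
      Summable.of_nonneg_of_le (fun q => sq_nonneg _) hle (hc.mul_right T)
    refine ⟨hs, ?_⟩
    calc ∑' q : ℕ × ℤ, (‖c q.1 q.2‖ * myW T q.1 q.2) ^ 2
        ≤ ∑' q : ℕ × ℤ, ‖c q.1 q.2‖ ^ 2 * T := Summable.tsum_le_tsum hle hs (hc.mul_right T)
      _ = (∑' q : ℕ × ℤ, ‖c q.1 q.2‖ ^ 2) * T := hc.tsum_mul_right T
      _ ≤ 1 * T := mul_le_mul_of_nonneg_right hc1 hT.le
      _ = T := one_mul T
  obtain ⟨hu1s, hu1b⟩ := wsq a ha hA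
  obtain ⟨hv1s, hv1b⟩ := wsq b hb hB
  -- square bounds for v2 / v3
  have vsq : ∀ (cc : ℕ → ℂ), Summable (fun n : ℕ => ‖cc n‖ ^ 2) →
      (∑' n : ℕ, ‖cc n‖ ^ 2) ≤ 1 →
      Summable (fun q : ℕ × ℤ => (‖cc q.1‖ * (myW T q.1 q.2 * myE T q.1 q.2)) ^ 2) ∧
        ∑' q : ℕ × ℤ, (‖cc q.1‖ * (myW T q.1 q.2 * myE T q.1 q.2)) ^ 2 ≤ (2 * T) ^ 2 := by
    intro cc hcc hcc1
    have h0 : ∀ q : ℕ × ℤ, 0 ≤ (‖cc q.1‖ * (myW T q.1 q.2 * myE T q.1 q.2)) ^ 2 :=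
      fun q => sq_nonneg _
    have hle : ∀ (n : ℕ) (m : ℤ),
        (‖cc n‖ * (myW T n m * myE T n m)) ^ 2 ≤ (‖cc n‖ ^ 2 * T) * myE T n m ^ 2 := by
      intro n m
      have := mul_le_mul_of_nonneg_left (myWE_sq_le hT n m) (sq_nonneg ‖cc n‖)
      calc (‖cc n‖ * (myW T n m * myE T n m)) ^ 2
          = ‖cc n‖ ^ 2 * (myW T n m * myE T n m) ^ 2 := by rw [mul_pow]
        _ ≤ ‖cc n‖ ^ 2 * (T * myE T n m ^ 2) := this
        _ = (‖cc n‖ ^ 2 * T) * myE T n m ^ 2 := by ring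
    have hrow : ∀ n : ℕ,
        Summable (fun m : ℤ => (‖cc n‖ * (myW T n m * myE T n m)) ^ 2) := by
      intro n
      exact Summable.of_nonneg_of_le (fun m => sq_nonneg _) (hle n)
        (((my_count' T hT n).1).mul_left _)
    have hbd : ∀ n : ℕ,
        (∑' m : ℤ, (‖cc n‖ * (myW T n m * myE T n m)) ^ 2) ≤ ‖cc n‖ ^ 2 * (T * (4 * T)) := by
      intro n
      calc ∑' m : ℤ, (‖cc n‖ * (myW T n m * myE T n m)) ^ 2
          ≤ ∑' m : ℤ, (‖cc n‖ ^ 2 * T) * myE T n m ^ 2 :=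
            Summable.tsum_le_tsum (hle n) (hrow n) (((my_count' T hT n).1).mul_left _)
        _ = (‖cc n‖ ^ 2 * T) * ∑' m : ℤ, myE T n m ^ 2 := tsum_mul_left
        _ ≤ (‖cc n‖ ^ 2 * T) * (4 * T) :=
            mul_le_mul_of_nonneg_left (my_count' T hT n).2 (by positivity)
        _ = ‖cc n‖ ^ 2 * (T * (4 * T)) := by ring
    obtain ⟨hs, hbd2⟩ := my_prod h0 hcc hrow hbd
    refine ⟨hs, hbd2.trans ?_⟩
    calc (∑' n : ℕ, ‖cc n‖ ^ 2) * (T * (4 * T)) ≤ 1 * (T * (4 * T)) :=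
          mul_le_mul_of_nonneg_right hcc1 (by positivity)
      _ = (2 * T) ^ 2 := by ring
  obtain ⟨hv2s, hv2b⟩ := vsq bb hbb hBB
  obtain ⟨hv3s, hv3b⟩ := vsq aa haa hAA
  -- piece 4
  obtain ⟨hcs, hcb⟩ := my_cs (fun n => ‖aa n‖) (fun n => ‖bb n‖)
    (fun n => norm_nonneg _) (fun n => norm_nonneg _) haa hbb
  have hcb1 : (∑' n : ℕ, ‖aa n‖ * ‖bb n‖) ≤ 1 := by
    refine hcb.trans ?_
    calc Real.sqrt (∑' n : ℕ, ‖aa n‖ ^ 2) * Real.sqrt (∑' n : ℕ, ‖bb n‖ ^ 2)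
        ≤ Real.sqrt 1 * Real.sqrt 1 :=
          mul_le_mul (Real.sqrt_le_sqrt hAA) (Real.sqrt_le_sqrt hBB)
            (Real.sqrt_nonneg _) (Real.sqrt_nonneg _)
      _ = 1 := by rw [Real.sqrt_one, mul_one]
  have h40 : ∀ q : ℕ × ℤ, 0 ≤ h4 q := by
    intro q
    exact mul_nonneg (mul_nonneg (norm_nonneg _) (norm_nonneg _)) (sq_nonneg _)
  have h4row : ∀ n : ℕ, Summable (fun m : ℤ => h4 (n, m)) := by
    intro n
    simp only [hh4]
    exact ((my_count' T hT n).1).mul_left _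
  have h4bd : ∀ n : ℕ, (∑' m : ℤ, h4 (n, m)) ≤ (‖aa n‖ * ‖bb n‖) * (4 * T) := by
    intro n
    simp only [hh4]
    calc ∑' m : ℤ, (‖aa n‖ * ‖bb n‖) * myE T n m ^ 2
        = (‖aa n‖ * ‖bb n‖) * ∑' m : ℤ, myE T n m ^ 2 := tsum_mul_left
      _ ≤ (‖aa n‖ * ‖bb n‖) * (4 * T) :=
          mul_le_mul_of_nonneg_left (my_count' T hT n).2
            (mul_nonneg (norm_nonneg _) (norm_nonneg _))
  obtain ⟨h4s, h4b⟩ := my_prod h40 hcs h4row h4bd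
  have h4b1 : ∑' q : ℕ × ℤ, h4 q ≤ 4 * T := by
    refine h4b.trans ?_
    calc (∑' n : ℕ, ‖aa n‖ * ‖bb n‖) * (4 * T) ≤ 1 * (4 * T) :=
          mul_le_mul_of_nonneg_right hcb1 (by positivity)
      _ = 4 * T := one_mul _
  -- CS for pieces 1,2,3
  obtain ⟨p1s, p1b⟩ := my_cs u1 v1
    (fun q => mul_nonneg (norm_nonneg _) (myW_nonneg hT q.1 q.2))
    (fun q => mul_nonneg (norm_nonneg _) (myW_nonneg hT q.1 q.2)) hu1s hv1s
  have p1b1 : ∑' q : ℕ × ℤ, u1 q * v1 q ≤ T := by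
    refine p1b.trans ?_
    calc Real.sqrt (∑' q : ℕ × ℤ, u1 q ^ 2) * Real.sqrt (∑' q : ℕ × ℤ, v1 q ^ 2)
        ≤ Real.sqrt T * Real.sqrt T :=
          mul_le_mul (Real.sqrt_le_sqrt hu1b) (Real.sqrt_le_sqrt hv1b)
            (Real.sqrt_nonneg _) (Real.sqrt_nonneg _)
      _ = T := Real.mul_self_sqrt hT.le
  have vwenonneg : ∀ (cc : ℕ → ℂ) (q : ℕ × ℤ),
      0 ≤ ‖cc q.1‖ * (myW T q.1 q.2 * myE T q.1 q.2) := fun cc q =>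
    mul_nonneg (norm_nonneg _) (mul_nonneg (myW_nonneg hT q.1 q.2) (myE_nonneg q.1 q.2))
  obtain ⟨p2s, p2b⟩ := my_cs u2 v2 (fun q => norm_nonneg _) (vwenonneg bb) ha hv2s
  obtain ⟨p3s, p3b⟩ := my_cs u3 v3 (fun q => norm_nonneg _) (vwenonneg aa) hb hv3s
  have sqbd : ∀ x : ℝ, x ≤ (2 * T) ^ 2 → Real.sqrt x ≤ 2 * T := by
    intro x hx
    calc Real.sqrt x ≤ Real.sqrt ((2 * T) ^ 2) := Real.sqrt_le_sqrt hx
      _ = 2 * T := Real.sqrt_sq (by positivity)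
  have p2b1 : ∑' q : ℕ × ℤ, u2 q * v2 q ≤ 2 * T := by
    refine p2b.trans ?_
    calc Real.sqrt (∑' q : ℕ × ℤ, u2 q ^ 2) * Real.sqrt (∑' q : ℕ × ℤ, v2 q ^ 2)
        ≤ Real.sqrt 1 * (2 * T) :=
          mul_le_mul (Real.sqrt_le_sqrt hA) (sqbd _ hv2b) (Real.sqrt_nonneg _)
            (Real.sqrt_nonneg _)
      _ = 2 * T := by rw [Real.sqrt_one, one_mul]
  have p3b1 : ∑' q : ℕ × ℤ, u3 q * v3 q ≤ 2 * T := by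
    refine p3b.trans ?_
    calc Real.sqrt (∑' q : ℕ × ℤ, u3 q ^ 2) * Real.sqrt (∑' q : ℕ × ℤ, v3 q ^ 2)
        ≤ Real.sqrt 1 * (2 * T) :=
          mul_le_mul (Real.sqrt_le_sqrt hB) (sqbd _ hv3b) (Real.sqrt_nonneg _)
            (Real.sqrt_nonneg _)
      _ = 2 * T := by rw [Real.sqrt_one, one_mul]
  -- combine
  set G : ℕ × ℤ → ℝ := fun q => u1 q * v1 q + u2 q * v2 q + u3 q * v3 q + h4 q with hG
  have hGs : Summable G := ((p1s.add p2s).add p3s).add h4s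
  have hptw : ∀ q : ℕ × ℤ, ‖f q.1 q.2 * g q.1 q.2‖ ≤ G q := by
    intro q
    rw [norm_mul]
    have h1 := hfb q.1 q.2
    have h2 := hgb q.1 q.2
    have hg0 : 0 ≤ ‖b q.1 q.2‖ * myW T q.1 q.2 + ‖bb q.1‖ * myE T q.1 q.2 :=
      add_nonneg (mul_nonneg (norm_nonneg _) (myW_nonneg hT q.1 q.2))
        (mul_nonneg (norm_nonneg _) (myE_nonneg q.1 q.2))
    calc ‖f q.1 q.2‖ * ‖g q.1 q.2‖
        ≤ (‖a q.1 q.2‖ * myW T q.1 q.2 + ‖aa q.1‖ * myE T q.1 q.2) *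
            (‖b q.1 q.2‖ * myW T q.1 q.2 + ‖bb q.1‖ * myE T q.1 q.2) :=
          mul_le_mul h1 h2 (norm_nonneg _)
            (add_nonneg (mul_nonneg (norm_nonneg _) (myW_nonneg hT q.1 q.2))
              (mul_nonneg (norm_nonneg _) (myE_nonneg q.1 q.2)))
      _ = G q := by simp only [hG, hu1, hv1, hu2, hv2, hu3, hv3, hh4]; ring
  have hnorms : Summable (fun q : ℕ × ℤ => ‖f q.1 q.2 * g q.1 q.2‖) :=
    Summable.of_nonneg_of_le (fun q => norm_nonneg _) hptw hGs
  have hfg : Summable (fun q : ℕ × ℤ => f q.1 q.2 * g q.1 q.2) :=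
    hnorms.of_norm
  calc ‖∑' q : ℕ × ℤ, f q.1 q.2 * g q.1 q.2‖
      ≤ ∑' q : ℕ × ℤ, ‖f q.1 q.2 * g q.1 q.2‖ := norm_tsum_le_tsum_norm hnorms
    _ ≤ ∑' q : ℕ × ℤ, G q := Summable.tsum_le_tsum hptw hnorms hGs
    _ ≤ 9 * T := by
        rw [hG]
        have e1 : ∑' q : ℕ × ℤ, (u1 q * v1 q + u2 q * v2 q + u3 q * v3 q + h4 q)
            = (∑' q : ℕ × ℤ, u1 q * v1 q) + (∑' q : ℕ × ℤ, u2 q * v2 q)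
              + (∑' q : ℕ × ℤ, u3 q * v3 q) + (∑' q : ℕ × ℤ, h4 q) := by
          rw [Summable.tsum_add ((p1s.add p2s).add p3s) h4s, Summable.tsum_add (p1s.add p2s) p3s,
            Summable.tsum_add p1s p2s]
        rw [e1]
        linarith
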